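/- Let N ≥ 2 be a natural number, k > 0, and let μ ∈ ℝ^N satisfy μ₁ > μ₂ > … > μ_N. Define c_N(ν) = ∏_{1 ≤ i < j ≤ N} [ Γ(νᵢ − νⱼ) Γ(k(j−i+1)) ] / [ Γ(νᵢ − νⱼ + k) Γ(k(j−i)) ] for ν ∈ ℝ^N with νᵢ > νⱼ for i < j, and similarly c_{N−1} for vectors in ℝ^{N−1}. Let μ̄ = (μ₁ − μ_N, …, μ_{N−1} − μ_N) ∈ ℝ^{N−1}. Then lim_{n→∞} n^{k(N−1)} · c_N(nμ) / c_{N−1}(nμ̄) = ( Γ(Nk) / Γ(k) ) · ∏_{j=1}^{N−1} (μⱼ − μ_N)^{−k}, where the limit is taken as the natural number n tends to infinity. -/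

import Mathlib

open Real Filter Topology


/-- `c_M(ν) = ∏_{i<j} Γ(νᵢ−νⱼ)Γ(k(j−i+1)) / (Γ(νᵢ−νⱼ+k)Γ(k(j−i)))`. -/
noncomputable def cHarish (k : ℝ) {M : ℕ} (ν : Fin M → ℝ) : ℝ :=
  ∏ i : Fin M, ∏ j : Fin M,
    if i < j then
      Real.Gamma (ν i - ν j) * Real.Gamma (k * (((j : ℕ) : ℝ) - ((i : ℕ) : ℝ) + 1)) /
        (Real.Gamma (ν i - ν j + k) * Real.Gamma (k * (((j : ℕ) : ℝ) - ((i : ℕ) : ℝ))))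
    else 1

lemma exp_mul_log_rpow {a b : ℝ} (ha : 0 < a) : Real.exp (b * Real.log a) = a ^ b := by
  rw [Real.rpow_def_of_pos ha, mul_comm]

lemma gautschi_upper {s x : ℝ} (hs0 : 0 ≤ s) (hs1 : s ≤ 1) (hx : 0 < x) :
    Real.Gamma (x + s) ≤ Real.Gamma x * x ^ s := by
  have hΓx : 0 < Real.Gamma x := Real.Gamma_pos_of_pos hx
  have hΓx1 : 0 < Real.Gamma (x + 1) := Real.Gamma_pos_of_pos (by linarith)
  have hΓxs : 0 < Real.Gamma (x + s) := Real.Gamma_pos_of_pos (by linarith)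
  have hc := Real.convexOn_log_Gamma.2 (Set.mem_Ioi.mpr hx)
    (Set.mem_Ioi.mpr (show (0:ℝ) < x + 1 by linarith)) (by linarith : (0:ℝ) ≤ 1 - s)
    hs0 (by ring)
  simp only [Function.comp_apply, smul_eq_mul] at hc
  have hpt : (1 - s) * x + s * (x + 1) = x + s := by ring
  rw [hpt] at hc
  have h2 : Real.Gamma (x + s) ≤ Real.Gamma x ^ (1 - s) * Real.Gamma (x + 1) ^ s := by
    have h := Real.exp_le_exp.mpr hc
    rwa [Real.exp_log hΓxs, Real.exp_add, exp_mul_log_rpow hΓx, exp_mul_log_rpow hΓx1] at h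
  have h3 : Real.Gamma x ^ (1 - s) * Real.Gamma x ^ s = Real.Gamma x := by
    rw [← Real.rpow_add hΓx]; norm_num
  calc Real.Gamma (x + s) ≤ Real.Gamma x ^ (1 - s) * Real.Gamma (x + 1) ^ s := h2
    _ = Real.Gamma x ^ (1 - s) * (x ^ s * Real.Gamma x ^ s) := by
        rw [Real.Gamma_add_one hx.ne', Real.mul_rpow hx.le hΓx.le]
    _ = (Real.Gamma x ^ (1 - s) * Real.Gamma x ^ s) * x ^ s := by ring
    _ = Real.Gamma x * x ^ s := by rw [h3]

lemma gautschi_lower {s x : ℝ} (hs0 : 0 ≤ s) (hs1 : s ≤ 1) (hx : 0 < x) :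
    Real.Gamma x * x ≤ Real.Gamma (x + s) * (x + s) ^ (1 - s) := by
  have hxs : 0 < x + s := by linarith
  have hΓxs : 0 < Real.Gamma (x + s) := Real.Gamma_pos_of_pos hxs
  have hΓxs1 : 0 < Real.Gamma (x + s + 1) := Real.Gamma_pos_of_pos (by linarith)
  have hΓx1 : 0 < Real.Gamma (x + 1) := Real.Gamma_pos_of_pos (by linarith)
  have hc := Real.convexOn_log_Gamma.2 (Set.mem_Ioi.mpr hxs)
    (Set.mem_Ioi.mpr (show (0:ℝ) < x + s + 1 by linarith)) hs0
    (by linarith : (0:ℝ) ≤ 1 - s) (by ring)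
  simp only [Function.comp_apply, smul_eq_mul] at hc
  have hpt : s * (x + s) + (1 - s) * (x + s + 1) = x + 1 := by ring
  rw [hpt] at hc
  have h2 : Real.Gamma (x + 1) ≤ Real.Gamma (x + s) ^ s * Real.Gamma (x + s + 1) ^ (1 - s) := by
    have h := Real.exp_le_exp.mpr hc
    rwa [Real.exp_log hΓx1, Real.exp_add, exp_mul_log_rpow hΓxs, exp_mul_log_rpow hΓxs1] at h
  have h3 : Real.Gamma (x + s) ^ s * Real.Gamma (x + s) ^ (1 - s) = Real.Gamma (x + s) := by
    rw [← Real.rpow_add hΓxs]; norm_num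
  have h4 : Real.Gamma x * x = Real.Gamma (x + 1) := by
    rw [Real.Gamma_add_one hx.ne']; ring
  calc Real.Gamma x * x = Real.Gamma (x + 1) := h4
    _ ≤ Real.Gamma (x + s) ^ s * Real.Gamma (x + s + 1) ^ (1 - s) := h2
    _ = Real.Gamma (x + s) ^ s * ((x + s) ^ (1 - s) * Real.Gamma (x + s) ^ (1 - s)) := by
        rw [Real.Gamma_add_one hxs.ne', Real.mul_rpow hxs.le hΓxs.le]
    _ = (Real.Gamma (x + s) ^ s * Real.Gamma (x + s) ^ (1 - s)) * (x + s) ^ (1 - s) := by ring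
    _ = Real.Gamma (x + s) * (x + s) ^ (1 - s) := by rw [h3]


lemma frac_tendsto_one (c : ℝ) : Tendsto (fun x : ℝ => x / (x + c)) atTop (𝓝 1) := by
  have h0 : Tendsto (fun x : ℝ => c / (x + c)) atTop (𝓝 0) :=
    Tendsto.div_atTop tendsto_const_nhds (tendsto_atTop_add_const_right _ c tendsto_id)
  have h1 : Tendsto (fun x : ℝ => 1 - c / (x + c)) atTop (𝓝 1) := by
    simpa using tendsto_const_nhds.sub h0
  refine h1.congr' ?_
  filter_upwards [eventually_gt_atTop (-c)] with x hx
  have hxc : x + c ≠ 0 := by linarith [neg_lt_iff_pos_add.mp hx]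
  field_simp
  ring

lemma frac_tendsto_one' (c : ℝ) : Tendsto (fun x : ℝ => (x + c) / x) atTop (𝓝 1) := by
  have := (frac_tendsto_one c).inv₀ one_ne_zero
  simp only [inv_one] at this
  refine this.congr' ?_
  filter_upwards [eventually_gt_atTop (max 0 (-c))] with x hx
  rw [inv_div]


lemma ratio_base {k : ℝ} (hk0 : 0 < k) (hk1 : k ≤ 1) :
    Tendsto (fun x : ℝ => Real.Gamma (x + k) / (Real.Gamma x * x ^ k)) atTop (𝓝 1) := by
  have hlow : Tendsto (fun x : ℝ => (x / (x + k)) ^ (1 - k)) atTop (𝓝 1) := by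
    have := (frac_tendsto_one k).rpow_const (p := 1-k) (Or.inl one_ne_zero)
    simpa using this
  refine tendsto_of_tendsto_of_tendsto_of_le_of_le' hlow tendsto_const_nhds ?_ ?_
  · filter_upwards [eventually_gt_atTop (0:ℝ)] with x hx
    have hxs : 0 < x + k := by linarith
    have hΓx : 0 < Real.Gamma x := Real.Gamma_pos_of_pos hx
    have hΓxs : 0 < Real.Gamma (x + k) := Real.Gamma_pos_of_pos hxs
    rw [Real.div_rpow hx.le hxs.le, div_le_div_iff₀ (Real.rpow_pos_of_pos hxs _) (by positivity)]
    calc x ^ (1-k) * (Real.Gamma x * x ^ k) = Real.Gamma x * (x ^ (1-k) * x ^ k) := by ring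
      _ = Real.Gamma x * x := by rw [← Real.rpow_add hx]; norm_num
      _ ≤ _ := gautschi_lower hk0.le hk1 hx
  · filter_upwards [eventually_gt_atTop (0:ℝ)] with x hx
    have hΓx : 0 < Real.Gamma x := Real.Gamma_pos_of_pos hx
    rw [div_le_one (by positivity)]
    exact gautschi_upper hk0.le hk1 hx

lemma ratio_tendsto_aux : ∀ n : ℕ, ∀ k : ℝ, 0 < k → k ≤ n + 1 →
    Tendsto (fun x : ℝ => Real.Gamma (x + k) / (Real.Gamma x * x ^ k)) atTop (𝓝 1) := by
  intro n
  induction n with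
  | zero => intro k hk hk1; exact ratio_base hk (by simpa using hk1)
  | succ n ih =>
    intro k hk hkn
    rcases le_or_gt k (↑n + 1) with h | h
    · exact ih k hk h
    · have h1 : (1:ℝ) ≤ (n:ℝ) + 1 := by have := Nat.cast_nonneg (α:=ℝ) n; linarith
      have hk' : 0 < k - 1 := by linarith
      have h2 : k - 1 ≤ (n:ℝ) + 1 := by push_cast at hkn; linarith
      have hmul := (ih (k-1) hk' h2).mul (frac_tendsto_one' (k-1))
      rw [mul_one] at hmul
      refine hmul.congr' ?_
      filter_upwards [eventually_gt_atTop (0:ℝ)] with x hx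
      have hxk : x + (k-1) ≠ 0 := by linarith
      have hg : Real.Gamma (x + k) = (x + (k-1)) * Real.Gamma (x + (k-1)) := by
        rw [show x + k = (x + (k-1)) + 1 by ring, Real.Gamma_add_one hxk]
      have hp : x ^ (k-1) * x = x ^ k := by
        have h := Real.rpow_add hx (k-1) 1
        rw [Real.rpow_one, show k - 1 + 1 = k by ring] at h
        exact h.symm
      have hΓx : 0 < Real.Gamma x := Real.Gamma_pos_of_pos hx
      have hpk : (0:ℝ) < x ^ (k-1) := Real.rpow_pos_of_pos hx _
      rw [hg, ← hp]
      field_simp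

lemma ratio_tendsto {k : ℝ} (hk : 0 < k) :
    Tendsto (fun x : ℝ => Real.Gamma (x + k) / (Real.Gamma x * x ^ k)) atTop (𝓝 1) :=
  ratio_tendsto_aux ⌈k⌉₊ k hk ((Nat.le_ceil k).trans (by linarith [Nat.le_ceil k]))

lemma factor_tendsto {k d : ℝ} (hk : 0 < k) (hd : 0 < d) :
    Tendsto (fun n : ℕ => (n:ℝ)^k * Real.Gamma ((n:ℝ)*d) / Real.Gamma ((n:ℝ)*d + k)) atTop
      (𝓝 (d ^ (-k))) := by
  have hcomp : Tendsto (fun n : ℕ => (n:ℝ)*d) atTop atTop :=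
    tendsto_natCast_atTop_atTop.atTop_mul_const hd
  have h1 := (ratio_tendsto hk).comp hcomp
  have h2 := h1.inv₀ one_ne_zero
  rw [inv_one] at h2
  have h3 := h2.const_mul (d ^ (-k))
  rw [mul_one] at h3
  refine h3.congr' ?_
  filter_upwards [eventually_gt_atTop 0] with n hn
  have hn0 : (0:ℝ) < n := by exact_mod_cast hn
  have hnd : 0 < (n:ℝ)*d := by positivity
  have hΓ : 0 < Real.Gamma ((n:ℝ)*d) := Real.Gamma_pos_of_pos hnd
  have hΓk : 0 < Real.Gamma ((n:ℝ)*d + k) := Real.Gamma_pos_of_pos (by linarith)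
  simp only [Function.comp]
  rw [Real.mul_rpow hn0.le hd.le, Real.rpow_neg hd.le]
  have hdk : (0:ℝ) < d ^ k := Real.rpow_pos_of_pos hd _
  have hnk : (0:ℝ) < (n:ℝ) ^ k := Real.rpow_pos_of_pos hn0 _
  field_simp

lemma cHarish_sub_const (k c : ℝ) {M : ℕ} (ν : Fin M → ℝ) :
    cHarish k (fun i => ν i - c) = cHarish k ν := by
  unfold cHarish
  refine Finset.prod_congr rfl fun i _ => Finset.prod_congr rfl fun j _ => ?_
  simp [sub_sub_sub_cancel_right]

lemma cHarish_pos {k : ℝ} (hk : 0 < k) {M : ℕ} {ν : Fin M → ℝ}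
    (hν : ∀ i j : Fin M, i < j → ν j < ν i) : 0 < cHarish k ν := by
  unfold cHarish
  refine Finset.prod_pos fun i _ => Finset.prod_pos fun j _ => ?_
  split
  · next h =>
    have h1 : 0 < ν i - ν j := sub_pos.mpr (hν i j h)
    have h2 : (0:ℝ) < ((j:ℕ):ℝ) - ((i:ℕ):ℝ) := by
      have : (i:ℕ) < (j:ℕ) := h
      have : ((i:ℕ):ℝ) < ((j:ℕ):ℝ) := by exact_mod_cast this
      linarith
    exact div_pos
      (mul_pos (Real.Gamma_pos_of_pos h1) (Real.Gamma_pos_of_pos (by nlinarith)))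
      (mul_pos (Real.Gamma_pos_of_pos (by linarith)) (Real.Gamma_pos_of_pos (by nlinarith)))
  · exact one_pos

lemma cHarish_succ (k : ℝ) (M : ℕ) (ν : Fin (M+1) → ℝ) :
    cHarish k ν = cHarish k (fun i : Fin M => ν i.castSucc) *
      ∏ i : Fin M,
        (Real.Gamma (ν i.castSucc - ν (Fin.last M)) * Real.Gamma (k * ((M:ℝ) - ((i:ℕ):ℝ) + 1)) /
          (Real.Gamma (ν i.castSucc - ν (Fin.last M) + k) *
            Real.Gamma (k * ((M:ℝ) - ((i:ℕ):ℝ))))) := by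
  unfold cHarish
  rw [Fin.prod_univ_castSucc]
  have hlast : ∀ j : Fin (M+1), ¬ (Fin.last M < j) := fun j => not_lt.mpr (Fin.le_last j)
  simp only [hlast, if_false, Finset.prod_const_one, mul_one]
  simp only [Fin.prod_univ_castSucc]
  rw [Finset.prod_mul_distrib]
  congr 1
  refine Finset.prod_congr rfl fun i _ => ?_
  simp only [Fin.castSucc_lt_last, if_true, Fin.coe_castSucc, Fin.val_last]


lemma telescope {k : ℝ} (hk : 0 < k) (M : ℕ) :
    ∏ i ∈ Finset.range M, (Real.Gamma (k * ((i:ℝ) + 2)) / Real.Gamma (k * ((i:ℝ) + 1)))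
      = Real.Gamma (k * ((M:ℝ) + 1)) / Real.Gamma k := by
  induction M with
  | zero => simp [div_self (Real.Gamma_pos_of_pos hk).ne']
  | succ M ih =>
    rw [Finset.prod_range_succ, ih]
    have h1 : Real.Gamma (k * ((M:ℝ)+1)) ≠ 0 := (Real.Gamma_pos_of_pos (by positivity)).ne'
    have h2 : Real.Gamma k ≠ 0 := (Real.Gamma_pos_of_pos hk).ne'
    push_cast
    rw [show k * ((M:ℝ)+1+1) = k * ((M:ℝ)+2) by ring]
    field_simp

lemma const_prod {k : ℝ} (hk : 0 < k) (M : ℕ) :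
    ∏ i : Fin M, (Real.Gamma (k * ((M:ℝ) - ((i:ℕ):ℝ) + 1)) /
        Real.Gamma (k * ((M:ℝ) - ((i:ℕ):ℝ))))
      = Real.Gamma (k * ((M:ℝ) + 1)) / Real.Gamma k := by
  rw [Fin.prod_univ_eq_prod_range (fun i : ℕ =>
    Real.Gamma (k * ((M:ℝ) - (i:ℝ) + 1)) / Real.Gamma (k * ((M:ℝ) - (i:ℝ))))]
  rw [← telescope hk M, ← Finset.prod_range_reflect
    (fun i : ℕ => Real.Gamma (k * ((i:ℝ) + 2)) / Real.Gamma (k * ((i:ℝ) + 1))) M]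
  refine Finset.prod_congr rfl fun i hi => ?_
  have hi' : i < M := Finset.mem_range.mp hi
  have e1 : ((M - 1 - i : ℕ) : ℝ) = (M:ℝ) - 1 - (i:ℝ) := by
    have : 1 + i ≤ M := by omega
    push_cast [Nat.cast_sub (by omega : i ≤ M - 1), Nat.cast_sub (by omega : 1 ≤ M)]
    ring
  rw [e1]
  ring_nf

/-- for `N ≥ 2`, `k > 0` and strictly decreasing `μ ∈ ℝ^N`, with
`μ̄ = (μ₁−μ_N, …, μ_{N−1}−μ_N) ∈ ℝ^{N−1}`,
`lim_{n→∞} n^{k(N−1)} c_N(nμ) / c_{N−1}(nμ̄)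
 = (Γ(Nk)/Γ(k)) ∏_{j=1}^{N−1} (μⱼ−μ_N)^{−k}`. -/
theorem stmt11 (N : ℕ) (hN : 2 ≤ N) (k : ℝ) (hk : 0 < k) (μ : Fin N → ℝ)
    (hμ : ∀ i j : Fin N, i < j → μ j < μ i) :
    Filter.Tendsto (fun n : ℕ =>
      (n : ℝ) ^ (k * ((N : ℝ) - 1)) *
        cHarish k (fun i : Fin N => (n : ℝ) * μ i) /
        cHarish k (fun i : Fin (N - 1) =>
          (n : ℝ) * (μ (Fin.castLE (by omega) i) - μ ⟨N - 1, by omega⟩)))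
      Filter.atTop
      (nhds (Real.Gamma ((N : ℝ) * k) / Real.Gamma k *
        ∏ j : Fin (N - 1),
          (μ (Fin.castLE (by omega) j) - μ ⟨N - 1, by omega⟩) ^ (-k))) := by
  obtain ⟨M, rfl⟩ : ∃ M, N = M + 1 := ⟨N - 1, by omega⟩
  set d : Fin M → ℝ := fun i => μ i.castSucc - μ (Fin.last M) with hd
  have hdpos : ∀ i : Fin M, 0 < d i :=
    fun i => sub_pos.mpr (hμ _ _ (Fin.castSucc_lt_last i))
  -- the limit of the model function
  have hlim : Tendsto (fun n : ℕ => (∏ i : Fin M,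
        ((n:ℝ)^k * Real.Gamma ((n:ℝ) * d i) / Real.Gamma ((n:ℝ) * d i + k))) *
        (Real.Gamma (k * ((M:ℝ) + 1)) / Real.Gamma k)) atTop
      (𝓝 ((∏ i : Fin M, (d i) ^ (-k)) * (Real.Gamma (k * ((M:ℝ) + 1)) / Real.Gamma k))) := by
    exact (tendsto_finset_prod _ fun i _ => factor_tendsto hk (hdpos i)).mul_const _
  have hval : (∏ i : Fin M, (d i) ^ (-k)) * (Real.Gamma (k * ((M:ℝ) + 1)) / Real.Gamma k)
      = Real.Gamma (((M+1:ℕ) : ℝ) * k) / Real.Gamma k *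
        ∏ j : Fin (M + 1 - 1),
          (μ (Fin.castLE (by omega) j) - μ ⟨M + 1 - 1, by omega⟩) ^ (-k) := by
    rw [mul_comm]
    congr 2
    · push_cast; ring
  rw [← hval]
  refine hlim.congr' ?_
  filter_upwards [eventually_ge_atTop 1] with n hn
  have hn0 : (0:ℝ) < n := by exact_mod_cast hn
  -- rewrite the denominator
  have hden : cHarish k (fun i : Fin (M + 1 - 1) =>
        (n : ℝ) * (μ (Fin.castLE (by omega) i) - μ ⟨M + 1 - 1, by omega⟩))
      = cHarish k (fun i : Fin M => (n : ℝ) * μ i.castSucc) := by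
    have e : (fun i : Fin M =>
        (n : ℝ) * (μ (Fin.castLE (by omega : M ≤ M + 1) i) - μ ⟨M, by omega⟩))
        = fun i : Fin M => ((n:ℝ) * μ i.castSucc) - ((n:ℝ) * μ (Fin.last M)) := by
      funext i
      have h1 : Fin.castLE (by omega : M ≤ M + 1) i = i.castSucc := rfl
      have h2 : (⟨M, by omega⟩ : Fin (M+1)) = Fin.last M := rfl
      rw [h1, h2]; ring
    rw [show (fun i : Fin (M + 1 - 1) =>
        (n : ℝ) * (μ (Fin.castLE (by omega) i) - μ ⟨M + 1 - 1, by omega⟩))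
      = (fun i : Fin M =>
        (n : ℝ) * (μ (Fin.castLE (by omega : M ≤ M + 1) i) - μ ⟨M, by omega⟩)) from rfl, e]
    exact cHarish_sub_const k _ _
  have hdecr : ∀ i j : Fin M, i < j → ((n:ℝ) * μ j.castSucc) < ((n:ℝ) * μ i.castSucc) :=
    fun i j hij => by
      have := hμ i.castSucc j.castSucc (by simpa using hij)
      nlinarith
  have hpos : 0 < cHarish k (fun i : Fin M => (n : ℝ) * μ i.castSucc) :=
    cHarish_pos hk hdecr
  -- numerator via cHarish_succ
  have hnum := cHarish_succ k M (fun i : Fin (M+1) => (n : ℝ) * μ i)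
  have hfactor : ∀ i : Fin M,
      (Real.Gamma ((n:ℝ) * μ i.castSucc - (n:ℝ) * μ (Fin.last M)) *
          Real.Gamma (k * ((M:ℝ) - ((i:ℕ):ℝ) + 1)) /
        (Real.Gamma ((n:ℝ) * μ i.castSucc - (n:ℝ) * μ (Fin.last M) + k) *
          Real.Gamma (k * ((M:ℝ) - ((i:ℕ):ℝ)))))
      = ((n:ℝ)^k * Real.Gamma ((n:ℝ) * d i) / Real.Gamma ((n:ℝ) * d i + k)) *
        ((Real.Gamma (k * ((M:ℝ) - ((i:ℕ):ℝ) + 1)) /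
          Real.Gamma (k * ((M:ℝ) - ((i:ℕ):ℝ)))) / (n:ℝ)^k) := by
    intro i
    have e1 : (n:ℝ) * μ i.castSucc - (n:ℝ) * μ (Fin.last M) = (n:ℝ) * d i := by
      rw [hd]; ring
    have hnk : ((n:ℝ):ℝ)^k ≠ 0 := (Real.rpow_pos_of_pos hn0 k).ne'
    have hi : ((i:ℕ):ℝ) < (M:ℝ) := by exact_mod_cast i.isLt
    have hΓ1 : Real.Gamma ((n:ℝ) * d i + k) ≠ 0 :=
      (Real.Gamma_pos_of_pos (by have := hdpos i; positivity)).ne'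
    have hΓb : Real.Gamma (k * ((M:ℝ) - ((i:ℕ):ℝ))) ≠ 0 :=
      (Real.Gamma_pos_of_pos (by nlinarith)).ne'
    rw [e1]
    field_simp
  -- assemble
  have hnkM : ((n:ℝ)^k)^M = (n:ℝ) ^ (k * (((M+1:ℕ):ℝ) - 1)) := by
    rw [← Real.rpow_natCast ((n:ℝ)^k) M, ← Real.rpow_mul hn0.le]
    push_cast; ring_nf
  have hQ : (∏ i : Fin M, (Real.Gamma (k * ((M:ℝ) - ((i:ℕ):ℝ) + 1)) /
        Real.Gamma (k * ((M:ℝ) - ((i:ℕ):ℝ))) / (n:ℝ)^k))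
      = (Real.Gamma (k * ((M:ℝ) + 1)) / Real.Gamma k) /
        (n:ℝ) ^ (k * (((M+1:ℕ):ℝ) - 1)) := by
    rw [Finset.prod_div_distrib, Finset.prod_const, Finset.card_univ, Fintype.card_fin,
      const_prod hk M, hnkM]
  have hne : (n:ℝ) ^ (k * (((M+1:ℕ):ℝ) - 1)) ≠ 0 := (Real.rpow_pos_of_pos hn0 _).ne'
  have key : ∀ (P C nk cS : ℝ), nk ≠ 0 → cS ≠ 0 →
      nk * (cS * (P * (C / nk))) / cS = P * C := by
    intros P C nk cS h1 h2; field_simp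
  simp only [hden, hnum]
  rw [Finset.prod_congr rfl (fun i _ => hfactor i), Finset.prod_mul_distrib, hQ,
    key _ _ _ _ hne hpos.ne']
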